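/- Let A be a finite abelian group. Then the wreath product A ≀ ℤ admits a pointy action. -/

import Mathlib

/-! Common definitions: the full shift, its automorphism group, and wreath products. -/

/-- The full shift space `Σ^ℤ` (functions `ℤ → α`), carrying the product topology
where the alphabet `α` is given the discrete topology. -/
def FullShift (α : Type*) : Type _ := ℤ → α

instance (α : Type*) : TopologicalSpace (FullShift α) :=
  letI : TopologicalSpace α := ⊥
  (inferInstance : TopologicalSpace (ℤ → α))

/-- The shift homeomorphism `σ(x)(i) = x(i+1)`. -/
def shiftHomeo (α : Type*) : FullShift α ≃ₜ FullShift α where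
  toFun x := fun i => x (i + 1)
  invFun x := fun i => x (i - 1)
  left_inv x := by funext i; show x (i - 1 + 1) = x i; ring_nf
  right_inv x := by funext i; show x (i + 1 - 1) = x i; ring_nf
  continuous_toFun := by
    letI : TopologicalSpace α := ⊥
    exact continuous_pi fun i => continuous_apply (i + 1)
  continuous_invFun := by
    letI : TopologicalSpace α := ⊥
    exact continuous_pi fun i => continuous_apply (i - 1)

/-- The group of self-homeomorphisms of the full shift, under composition. -/
instance fullShiftHomeoGroup (α : Type*) : Group (FullShift α ≃ₜ FullShift α) where
  mul f g := g.trans f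
  one := Homeomorph.refl _
  inv := Homeomorph.symm
  mul_assoc f g h := Homeomorph.ext fun _ => rfl
  one_mul f := Homeomorph.ext fun _ => rfl
  mul_one f := Homeomorph.ext fun _ => rfl
  inv_mul_cancel f := Homeomorph.ext fun x => f.symm_apply_apply x

/-- The automorphism group `Aut(Σ^ℤ)` of the full shift: the centralizer of the
shift map in the group of self-homeomorphisms. -/
def ShiftAut (α : Type*) : Subgroup (FullShift α ≃ₜ FullShift α) :=
  Subgroup.centralizer {shiftHomeo α}

/-- The multiplicative group structure on `AddAut M` of the older Mathlib
(`e₁ * e₂ = e₂.trans e₁`); current Mathlib makes `AddAut M` an additive group instead. -/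
instance addAutMulGroupOld (M : Type*) [Add M] : Group (AddAut M) where
  mul g h := AddEquiv.trans h g
  one := AddEquiv.refl _
  inv := AddEquiv.symm
  mul_assoc _ _ _ := rfl
  one_mul _ := rfl
  mul_one _ := rfl
  inv_mul_cancel := AddEquiv.self_trans_symm

/-- Additive automorphisms of `M` as multiplicative automorphisms of `Multiplicative M`. -/
def addAutToMulAut (M : Type*) [AddCommGroup M] : AddAut M →* MulAut (Multiplicative M) where
  toFun e := AddEquiv.toMultiplicative e
  map_one' := rfl
  map_mul' _ _ := rfl

/-- Permutations of `Ω` acting on finitely supported functions `Ω →₀ A`. -/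
def finsuppDomAut (A : Type*) [AddCommGroup A] (Ω : Type*) :
    Equiv.Perm Ω →* AddAut (Ω →₀ A) where
  toFun e := Finsupp.domCongr e
  map_one' := Finsupp.domCongr_refl
  map_mul' e₁ e₂ := (Finsupp.domCongr_trans e₂ e₁).symm

/-- The action of `H` on `⨁_{ω ∈ Ω} A` given by `(h • f)(ω) = f(h⁻¹ • ω)`,
as a homomorphism to the automorphism group of the direct sum. -/
noncomputable def permWreathAction (A : Type*) [AddCommGroup A] (H : Type*) [Group H]
    (Ω : Type*) [MulAction H Ω] : H →* MulAut (Multiplicative (Ω →₀ A)) :=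
  (addAutToMulAut (Ω →₀ A)).comp ((finsuppDomAut A Ω).comp (MulAction.toPermHom H Ω))

/-- The (restricted) permutational wreath product `A ≀_Ω H`:
the semidirect product `(⨁_{ω ∈ Ω} A) ⋊ H` where `H` acts by `(h • f)(ω) = f(h⁻¹ • ω)`. -/
abbrev PermWreath (A : Type*) [AddCommGroup A] (H : Type*) [Group H]
    (Ω : Type*) [MulAction H Ω] : Type _ :=
  SemidirectProduct (Multiplicative (Ω →₀ A)) H (permWreathAction A H Ω)

/-- The (restricted, regular) wreath product `A ≀ H`: the semidirect product
`(⨁_{h ∈ H} A) ⋊ H` where `H` acts by translating indices, `(h • f)(x) = f(h⁻¹x)`. -/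
abbrev RestrictedWreath (A : Type*) [AddCommGroup A] (H : Type*) [Group H] : Type _ :=
  PermWreath A H H

/-- Self-homeomorphisms of the full shift act on the full shift by application. -/
instance fullShiftHomeoMulAction (α : Type*) :
    MulAction (FullShift α ≃ₜ FullShift α) (FullShift α) where
  smul f x := f x
  one_smul _ := rfl
  mul_smul _ _ _ := rfl

/-- The constant configuration with value `z`. -/
def constConfig (α : Type*) (z : α) : FullShift α := fun _ => z

/-- `Aut₀(Σ^ℤ)`: the subgroup of `Aut(Σ^ℤ)` consisting of the shift-commuting
self-homeomorphisms which fix the constant-`z` configuration. -/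
def ShiftAut₀ (α : Type*) (z : α) : Subgroup (FullShift α ≃ₜ FullShift α) :=
  ShiftAut α ⊓ MulAction.stabilizer (FullShift α ≃ₜ FullShift α) (constConfig α z)

/-- A group `G` admits a *pointy action* if there is a finite alphabet `E` with a
distinguished element `z` and an injective homomorphism `φ : G →* Aut(E^ℤ)` such that every
`φ g` fixes the constant-`z` configuration, and some `z`-finite configuration `x₀` has free
orbit, i.e. `g ↦ φ(g)(x₀)` is injective. -/
def HasPointyAction (G : Type*) [Group G] : Prop :=
  ∃ (E : Type) (_ : Fintype E) (z : E) (φ : G →* ShiftAut E),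
    Function.Injective φ ∧
    (∀ g : G, (φ g : FullShift E ≃ₜ FullShift E) • constConfig E z = constConfig E z) ∧
    ∃ x₀ : FullShift E, {i : ℤ | x₀ i ≠ z}.Finite ∧
      Function.Injective fun g : G => (φ g : FullShift E ≃ₜ FullShift E) • x₀


section LampAux

open Multiplicative

variable {A : Type} [AddCommGroup A]

/-- Sum of `f n` over positions `n` where the marker `y (toAdd n)` is lit. -/
def addTerm (f : Multiplicative ℤ →₀ A) (y : ℤ → Bool) : A :=
  f.sum fun n a => if y (Multiplicative.toAdd n) then a else 0

lemma addTerm_congr {f : Multiplicative ℤ →₀ A} {y y' : ℤ → Bool}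
    (h : ∀ n ∈ f.support, y (toAdd n) = y' (toAdd n)) : addTerm f y = addTerm f y' :=
  Finsupp.sum_congr fun n hn => by rw [h n hn]

lemma addTerm_add (f f' : Multiplicative ℤ →₀ A) (y : ℤ → Bool) :
    addTerm (f + f') y = addTerm f y + addTerm f' y :=
  Finsupp.sum_add_index' (fun _ => ite_self 0) (fun _ b₁ b₂ => by split <;> simp)

lemma addTerm_perm (r : Multiplicative ℤ) (f : Multiplicative ℤ →₀ A) (y : ℤ → Bool) :
    addTerm (Finsupp.equivMapDomain (MulAction.toPermHom (Multiplicative ℤ) (Multiplicative ℤ) r) f) y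
      = addTerm f (fun k => y (toAdd r + k)) := by
  unfold addTerm
  rw [Finsupp.sum_equivMapDomain]
  rfl

lemma addTerm_false (f : Multiplicative ℤ →₀ A) :
    addTerm f (fun _ => false) = 0 := by
  unfold addTerm; simp

lemma addTerm_single (f : Multiplicative ℤ →₀ A) (m : ℤ) :
    addTerm f (fun k => decide (k = m)) = f (ofAdd m) := by
  unfold addTerm
  rw [Finsupp.sum_eq_single (ofAdd m)
    (fun a _ hne => by
      have hta : ¬ (toAdd a = m) := fun hh => hne (by rw [← ofAdd_toAdd a, hh])
      simp [hta])
    (fun h0 => by simp [h0])]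
  simp

lemma toAdd_perm (r : Multiplicative ℤ) (f : Multiplicative (Multiplicative ℤ →₀ A)) :
    toAdd (permWreathAction A (Multiplicative ℤ) (Multiplicative ℤ) r f)
      = Finsupp.equivMapDomain (MulAction.toPermHom (Multiplicative ℤ) (Multiplicative ℤ) r) (toAdd f) := rfl

/-- The cellular automaton realizing the lamplighter element `g`. -/
def lampFun (g : RestrictedWreath A (Multiplicative ℤ)) (x : FullShift (A × Bool)) :
    FullShift (A × Bool) :=
  fun i =>
    ((x i).1 + addTerm (toAdd g.left) (fun k => (x (i - k + toAdd g.right)).2),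
      (x (i + toAdd g.right)).2)

lemma addTerm_zero (y : ℤ → Bool) : addTerm (0 : Multiplicative ℤ →₀ A) y = 0 := by
  unfold addTerm; simp

lemma lampFun_one : lampFun (A := A) 1 = id := by
  funext x i
  unfold lampFun
  have h1 : toAdd (SemidirectProduct.left
      (1 : RestrictedWreath A (Multiplicative ℤ))) = 0 := rfl
  have h2 : toAdd (SemidirectProduct.right
      (1 : RestrictedWreath A (Multiplicative ℤ))) = 0 := rfl
  rw [h1, h2, addTerm_zero]
  simp

lemma lampFun_mul (g h : RestrictedWreath A (Multiplicative ℤ)) :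
    lampFun (g * h) = lampFun g ∘ lampFun h := by
  funext x i
  set f := toAdd g.left with hf
  set f' := toAdd h.left with hf'
  set s := toAdd g.right with hs
  set t := toAdd h.right with ht
  have hleft : toAdd (g * h).left
      = f + Finsupp.equivMapDomain
          (MulAction.toPermHom (Multiplicative ℤ) (Multiplicative ℤ) g.right) f' := rfl
  have hright : toAdd (g * h).right = s + t := rfl
  show ((x i).1 + addTerm (toAdd (g*h).left) (fun k => (x (i - k + toAdd (g*h).right)).2),
        (x (i + toAdd (g*h).right)).2)
      = lampFun g (lampFun h x) i
  rw [hleft, hright, addTerm_add, addTerm_perm]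
  show _ = (((lampFun h x) i).1
      + addTerm f (fun k => ((lampFun h x) (i - k + s)).2), ((lampFun h x) (i + s)).2)
  show _ = (((x i).1 + addTerm f' (fun k => (x (i - k + t)).2))
      + addTerm f (fun k => (x (i - k + s + t)).2), (x (i + s + t)).2)
  have e1 : addTerm (A := A) f (fun k => (x (i - k + (s + t))).2)
      = addTerm f (fun k => (x (i - k + s + t)).2) := by
    apply addTerm_congr; intro n _; congr 1; ring
  have e2 : addTerm (A := A) f' (fun k => (x (i - (s + k) + (s + t))).2)
      = addTerm f' (fun k => (x (i - k + t)).2) := by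
    apply addTerm_congr; intro n _; congr 1; ring
  rw [e1, e2]
  simp only [Prod.mk.injEq]
  exact ⟨by abel, congrArg (fun j => (x j).2) (by ring)⟩

lemma lampFun_continuous (g : RestrictedWreath A (Multiplicative ℤ)) :
    Continuous (lampFun g) := by
  letI : TopologicalSpace (A × Bool) := ⊥
  haveI : DiscreteTopology (A × Bool) := ⟨rfl⟩
  apply continuous_pi
  intro i
  classical
  set f := toAdd g.left with hf
  set t := toAdd g.right with ht
  set S : Finset ℤ :=
    insert i (insert (i + t) (f.support.image fun n => i - toAdd n + t)) with hS
  have key : (fun x : FullShift (A × Bool) => lampFun g x i)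
      = (fun c : (S → (A × Bool)) =>
          lampFun g (fun j => if hj : j ∈ S then c ⟨j, hj⟩ else ((0 : A), false)) i)
        ∘ (fun (x : FullShift (A × Bool)) (j : S) => x (j : ℤ)) := by
    funext x
    simp only [Function.comp]
    set x' : FullShift (A × Bool) :=
      (fun j => if hj : j ∈ S then x j else ((0 : A), false)) with hx'
    have hagree : ∀ j ∈ S, x j = x' j := by
      intro j hj; simp [hx', hj]
    show lampFun g x i = lampFun g x' i
    unfold lampFun
    have h1 : x i = x' i := hagree i (by simp [hS])
    have h2 : x (i + t) = x' (i + t) := hagree _ (by simp [hS])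
    have h3 : addTerm f (fun k => (x (i - k + t)).2)
        = addTerm f (fun k => (x' (i - k + t)).2) := by
      apply addTerm_congr
      intro n hn
      have hmem : i - toAdd n + t ∈ S := by
        rw [hS]
        simp only [Finset.mem_insert]
        right; right
        exact Finset.mem_image.mpr ⟨n, hn, rfl⟩
      rw [hagree _ hmem]
    rw [h1, h2, h3]
  rw [key]
  exact Continuous.comp continuous_of_discreteTopology
    (continuous_pi fun j => continuous_apply (j : ℤ))

/-- The lamplighter CA as a homeomorphism. -/
noncomputable def lampHomeo (g : RestrictedWreath A (Multiplicative ℤ)) :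
    FullShift (A × Bool) ≃ₜ FullShift (A × Bool) where
  toFun := lampFun g
  invFun := lampFun g⁻¹
  left_inv x := by
    have h := congrFun (lampFun_mul (A := A) g⁻¹ g) x
    rw [inv_mul_cancel, lampFun_one] at h
    exact h.symm
  right_inv x := by
    have h := congrFun (lampFun_mul (A := A) g g⁻¹) x
    rw [mul_inv_cancel, lampFun_one] at h
    exact h.symm
  continuous_toFun := lampFun_continuous g
  continuous_invFun := lampFun_continuous g⁻¹

lemma lampHomeo_mem (g : RestrictedWreath A (Multiplicative ℤ)) :
    lampHomeo g ∈ ShiftAut (A × Bool) := by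
  rw [ShiftAut, Subgroup.mem_centralizer_iff]
  intro h hh
  rw [Set.mem_singleton_iff] at hh
  subst hh
  apply Homeomorph.ext
  intro x
  show shiftHomeo (A × Bool) (lampFun g x) = lampFun g (shiftHomeo (A × Bool) x)
  funext i
  show lampFun g x (i + 1) = lampFun g (fun j => x (j + 1)) i
  unfold lampFun
  simp only [Prod.mk.injEq]
  set f := toAdd g.left
  set t := toAdd g.right
  constructor
  · have e : addTerm (A := A) f (fun k => (x (i + 1 - k + t)).2)
        = addTerm f (fun k => (x (i - k + t + 1)).2) := by
      apply addTerm_congr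
      intro n _
      congr 2
      ring
    rw [e]
  · exact congrArg (fun j => (x j).2) (by ring)

end LampAux


/-- The lamplighter action as a homomorphism into the self-homeomorphism group. -/
noncomputable def lampHomeoHom (A : Type) [AddCommGroup A] :
    RestrictedWreath A (Multiplicative ℤ) →*
      (FullShift (A × Bool) ≃ₜ FullShift (A × Bool)) where
  toFun := lampHomeo
  map_one' := Homeomorph.ext fun x => congrFun (lampFun_one (A := A)) x
  map_mul' g h := Homeomorph.ext fun x => congrFun (lampFun_mul g h) x

/-- The lamplighter action as a homomorphism into `Aut(Σ^ℤ)`. -/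
noncomputable def lampHom (A : Type) [AddCommGroup A] :
    RestrictedWreath A (Multiplicative ℤ) →* ShiftAut (A × Bool) :=
  (lampHomeoHom A).codRestrict (ShiftAut (A × Bool)) lampHomeo_mem

/-- The base configuration: a single marker at the origin. -/
def lampBase (A : Type) [AddCommGroup A] : FullShift (A × Bool) :=
  fun i => ((0 : A), decide (i = 0))

lemma lampFun_base (A : Type) [AddCommGroup A]
    (g : RestrictedWreath A (Multiplicative ℤ)) :
    lampFun g (lampBase A) = fun i =>
      (Multiplicative.toAdd g.left (Multiplicative.ofAdd (i + Multiplicative.toAdd g.right)),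
        decide (i + Multiplicative.toAdd g.right = 0)) := by
  funext i
  unfold lampFun lampBase
  simp only [Prod.mk.injEq]
  set f := Multiplicative.toAdd g.left
  set t := Multiplicative.toAdd g.right
  constructor
  · have e : addTerm (A := A) f (fun k => decide (i - k + t = 0))
        = addTerm f (fun k => decide (k = i + t)) := by
      apply addTerm_congr
      intro n _
      exact decide_eq_decide.mpr (by omega)
    rw [e, addTerm_single, zero_add]
  · trivial

lemma lampFun_base_injective (A : Type) [AddCommGroup A] :
    Function.Injective (fun g : RestrictedWreath A (Multiplicative ℤ) =>
      lampFun g (lampBase A)) := by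
  intro g g' h
  replace h : lampFun g (lampBase A) = lampFun g' (lampBase A) := h
  rw [lampFun_base, lampFun_base] at h
  set f := Multiplicative.toAdd g.left with hf
  set f' := Multiplicative.toAdd g'.left with hf'
  set t := Multiplicative.toAdd g.right with ht
  set t' := Multiplicative.toAdd g'.right with ht'
  have htt : t = t' := by
    have h2 := congrArg (fun y => (y (-t)).2) h
    simp only at h2
    have : (-t) + t = 0 := by ring
    rw [this] at h2
    have : (-t) + t' = 0 := of_decide_eq_true (by rw [← h2]; simp)
    omega
  have hff : f = f' := by
    ext n
    have h1 := congrArg (fun y => (y (Multiplicative.toAdd n - t)).1) h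
    simp only at h1
    rw [← htt] at h1
    have e : Multiplicative.toAdd n - t + t = Multiplicative.toAdd n := by ring
    rw [e] at h1
    simpa using h1
  have hL : g.left = g'.left := Multiplicative.toAdd.injective (hf ▸ hf' ▸ hff)
  have hR : g.right = g'.right := Multiplicative.toAdd.injective (ht ▸ ht' ▸ htt)
  cases g
  cases g'
  simp_all

/-- For every finite abelian group `A`, the lamplighter group `A ≀ ℤ`
admits a pointy action. -/
theorem lamplighter_hasPointyAction (A : Type) [AddCommGroup A] [Finite A] :
    HasPointyAction (RestrictedWreath A (Multiplicative ℤ)) := by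
  classical
  refine ⟨A × Bool, Fintype.ofFinite _, ((0 : A), false), lampHom A, ?_, ?_, ?_⟩
  · intro a b hab
    apply lampFun_base_injective A
    show lampFun a (lampBase A) = lampFun b (lampBase A)
    have h1 : lampHomeo a = lampHomeo b := congrArg Subtype.val hab
    exact congrFun (congrArg (fun e : FullShift (A × Bool) ≃ₜ FullShift (A × Bool) =>
      (e : FullShift (A × Bool) → FullShift (A × Bool))) h1) (lampBase A)
  · intro g
    show lampFun g (constConfig (A × Bool) ((0 : A), false)) = constConfig (A × Bool) ((0 : A), false)
    funext i
    show ((constConfig (A × Bool) ((0 : A), false) i).1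
        + addTerm (Multiplicative.toAdd g.left) _, (constConfig (A × Bool) ((0 : A), false) _).2)
      = ((0 : A), false)
    have e : addTerm (Multiplicative.toAdd g.left)
        (fun k => (constConfig (A × Bool) ((0 : A), false)
          (i - k + Multiplicative.toAdd g.right)).2) = 0 := addTerm_false _
    rw [e]
    simp [constConfig]
  · refine ⟨lampBase A, ?_, ?_⟩
    · apply Set.Finite.subset (Set.finite_singleton (0 : ℤ))
      intro i hi
      simp only [Set.mem_setOf_eq, lampBase] at hi
      by_contra hne
      simp only [Set.mem_singleton_iff] at hne
      exact hi (by simp [hne])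
    · intro a b hab
      exact lampFun_base_injective A hab
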